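/- Let α, β, γ, λ, μ be real numbers and let N(α,β,γ,λ,μ) be the 3×3 real matrix whose rows are (α,β,γ), (λα,λβ,λγ), (μα,μβ,μγ). Suppose α ≠ 0, α² + λβ² + μγ² ≠ 0, λ > 0 and μ > 0. Then the evolution algebra E_{N(α,β,γ,λ,μ)} is isomorphic to the evolution algebra E₇ whose structure matrix has rows (1,0,0), (1,0,0), (1,0,0). -/

import Mathlib

/-- Evolution algebra multiplication on ℝ³ determined by a structure matrix `A`:
`(x ∗_A y) j = ∑ i, x i * y i * A i j`. -/
def evolMul (A : Matrix (Fin 3) (Fin 3) ℝ) (x y : Fin 3 → ℝ) : Fin 3 → ℝ :=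
  fun j => ∑ i, x i * y i * A i j

/-- The evolution algebras with structure matrices `A` and `B` are isomorphic:
there is an ℝ-linear equivalence of ℝ³ intertwining the two multiplications. -/
def EvolIso (A B : Matrix (Fin 3) (Fin 3) ℝ) : Prop :=
  ∃ f : (Fin 3 → ℝ) ≃ₗ[ℝ] (Fin 3 → ℝ),
    ∀ x y, f (evolMul A x y) = evolMul B (f x) (f y)

open Matrix

lemma evolIso_trans {A B C : Matrix (Fin 3) (Fin 3) ℝ}
    (h1 : EvolIso A B) (h2 : EvolIso B C) : EvolIso A C := by
  obtain ⟨f, hf⟩ := h1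
  obtain ⟨g, hg⟩ := h2
  exact ⟨f.trans g, fun x y => by
    simp only [LinearEquiv.trans_apply, hf, hg]⟩

noncomputable def Hmat (w1 w2 w3 e : ℝ) : Matrix (Fin 3) (Fin 3) ℝ :=
  !![1 - w1^2/e, -(w1*w2)/e, -(w1*w3)/e;
     -(w1*w2)/e, 1 - w2^2/e, -(w2*w3)/e;
     -(w1*w3)/e, -(w2*w3)/e, 1 - w3^2/e]

lemma Hmat_mulVec (w1 w2 w3 e : ℝ) (u : Fin 3 → ℝ) :
    (Hmat w1 w2 w3 e).mulVec u =
      fun i => u i - ((w1 * u 0 + w2 * u 1 + w3 * u 2)/e) * (![w1,w2,w3] i) := by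
  funext i
  fin_cases i <;>
    simp [Hmat, Matrix.mulVec, dotProduct, Fin.sum_univ_three] <;> ring

lemma Hmat_invol (w1 w2 w3 e : ℝ) (he : e ≠ 0) (hS : w1^2+w2^2+w3^2 = 2*e)
    (u : Fin 3 → ℝ) :
    (Hmat w1 w2 w3 e).mulVec ((Hmat w1 w2 w3 e).mulVec u) = u := by
  rw [Hmat_mulVec, Hmat_mulVec]
  funext i
  fin_cases i
  · simp only [Fin.zero_eta, Fin.mk_one, Fin.reduceFinMk, Matrix.cons_val_zero, Matrix.cons_val_one, Matrix.head_cons, Matrix.cons_val_two, Matrix.tail_cons]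
    field_simp
    linear_combination ((w1 * u 0 + w2 * u 1 + w3 * u 2) * w1) * hS
  · simp only [Fin.zero_eta, Fin.mk_one, Fin.reduceFinMk, Matrix.cons_val_zero, Matrix.cons_val_one, Matrix.head_cons, Matrix.cons_val_two, Matrix.tail_cons]
    field_simp
    linear_combination ((w1 * u 0 + w2 * u 1 + w3 * u 2) * w2) * hS
  · simp only [Fin.zero_eta, Fin.mk_one, Fin.reduceFinMk, Matrix.cons_val_zero, Matrix.cons_val_one, Matrix.head_cons, Matrix.cons_val_two, Matrix.tail_cons]
    field_simp
    linear_combination ((w1 * u 0 + w2 * u 1 + w3 * u 2) * w3) * hS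

lemma Hmat_dot (w1 w2 w3 e : ℝ) (he : e ≠ 0) (hS : w1^2+w2^2+w3^2 = 2*e)
    (x y : Fin 3 → ℝ) :
    ((Hmat w1 w2 w3 e).mulVec x 0) * ((Hmat w1 w2 w3 e).mulVec y 0)
    + ((Hmat w1 w2 w3 e).mulVec x 1) * ((Hmat w1 w2 w3 e).mulVec y 1)
    + ((Hmat w1 w2 w3 e).mulVec x 2) * ((Hmat w1 w2 w3 e).mulVec y 2)
      = x 0 * y 0 + x 1 * y 1 + x 2 * y 2 := by
  rw [Hmat_mulVec, Hmat_mulVec]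
  simp only [Matrix.cons_val_zero, Matrix.cons_val_one, Matrix.head_cons, Matrix.cons_val_two, Matrix.tail_cons]
  field_simp
  linear_combination ((w1 * x 0 + w2 * x 1 + w3 * x 2)
    * (w1 * y 0 + w2 * y 1 + w3 * y 2)) * hS

/-- Step 2: an all-rows-equal structure matrix is isomorphic to E₇. -/
lemma step2 (p q r t k : ℝ) (ht : t ≠ 0) (hk : k^2 = t^2)
    (h2 : p^2 + q^2 + r^2 = t^2) (he : t^2 - k*p ≠ 0) :
    EvolIso !![p, q, r; p, q, r; p, q, r] !![1, 0, 0; 1, 0, 0; 1, 0, 0] := by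
  have hk0 : k ≠ 0 := by
    intro h; rw [h] at hk; exact ht (by nlinarith)
  set e : ℝ := t^2 - k*p with hedef
  set H : Matrix (Fin 3) (Fin 3) ℝ := Hmat (p - k) q r e with hHdef
  have hS : (p-k)^2 + q^2 + r^2 = 2*e := by
    rw [hedef]; linear_combination h2 + hk
  have hinv := Hmat_invol (p-k) q r e he hS
  have hHv : H.mulVec ![p, q, r] = ![k, 0, 0] := by
    rw [hHdef, Hmat_mulVec]
    have hDv : (p - k) * (![p, q, r] : Fin 3 → ℝ) 0 + q * ![p, q, r] 1
        + r * ![p, q, r] 2 = e := by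
      simp only [Matrix.cons_val_zero, Matrix.cons_val_one, Matrix.head_cons,
        Matrix.cons_val_two, Matrix.tail_cons]
      rw [hedef]; linear_combination h2
    funext i
    rw [hDv, div_self he]
    fin_cases i <;> simp [Matrix.cons_val_two, Matrix.tail_cons, Matrix.head_cons, Matrix.cons_val_zero, Matrix.cons_val_one]
  refine ⟨{ toFun := fun u => k • H.mulVec u
            invFun := fun u => k⁻¹ • H.mulVec u
            map_add' := by
              intro x y; rw [Matrix.mulVec_add, smul_add]
            map_smul' := by
              intro c x
              rw [Matrix.mulVec_smul, RingHom.id_apply, smul_comm]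
            left_inv := by
              intro x
              simp only [hHdef, Matrix.mulVec_smul, hinv, smul_smul,
                inv_mul_cancel₀ hk0, one_smul]
            right_inv := by
              intro x
              simp only [hHdef, Matrix.mulVec_smul, hinv, smul_smul,
                mul_inv_cancel₀ hk0, one_smul] }, ?_⟩
  intro x y
  simp only [LinearEquiv.coe_mk, LinearMap.coe_mk, AddHom.coe_mk]
  have hAxy : evolMul !![p, q, r; p, q, r; p, q, r] x y
      = (x 0 * y 0 + x 1 * y 1 + x 2 * y 2) • (![p, q, r] : Fin 3 → ℝ) := by
    funext j
    fin_cases j <;>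
      simp [evolMul, Fin.sum_univ_three, smul_eq_mul] <;> ring
  rw [hAxy, Matrix.mulVec_smul, hHv]
  have hdot := Hmat_dot (p-k) q r e he hS x y
  rw [← hHdef] at hdot
  funext j
  fin_cases j
  · simp [evolMul, Fin.sum_univ_three, smul_eq_mul]
    linear_combination (-(k^2)) * hdot
  · simp [evolMul, Fin.sum_univ_three, smul_eq_mul]
  · simp [evolMul, Fin.sum_univ_three, smul_eq_mul]

/-- Step 1: scaling by a diagonal matrix. -/
lemma step1 (a b c l m r s : ℝ) (hr : r^2 = l) (hs : s^2 = m)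
    (hr0 : r ≠ 0) (hs0 : s ≠ 0) :
    EvolIso !![a, b, c; l * a, l * b, l * c; m * a, m * b, m * c]
      !![a, r*b, s*c; a, r*b, s*c; a, r*b, s*c] := by
  refine ⟨{ toFun := fun u => ![u 0, r * u 1, s * u 2]
            invFun := fun u => ![u 0, u 1 / r, u 2 / s]
            map_add' := by
              intro x y; funext i; fin_cases i <;> simp <;> ring
            map_smul' := by
              intro t x; funext i; fin_cases i <;> simp <;> ring
            left_inv := by
              intro x; funext i; fin_cases i <;> simp <;> field_simp
            right_inv := by
              intro x; funext i; fin_cases i <;> simp <;> field_simp }, ?_⟩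
  intro x y
  simp only [LinearEquiv.coe_mk, LinearMap.coe_mk, AddHom.coe_mk]
  funext j
  fin_cases j
  · simp [evolMul, Fin.sum_univ_three]
    linear_combination (-(x 1 * y 1 * a)) * hr + (-(x 2 * y 2 * a)) * hs
  · simp [evolMul, Fin.sum_univ_three]
    linear_combination (-(x 1 * y 1 * r * b)) * hr + (-(x 2 * y 2 * r * b)) * hs
  · simp [evolMul, Fin.sum_univ_three]
    linear_combination (-(x 1 * y 1 * s * c)) * hr + (-(x 2 * y 2 * s * c)) * hs

theorem stmt (a b c l m : ℝ)
    (ha : a ≠ 0) (hq : a ^ 2 + l * b ^ 2 + m * c ^ 2 ≠ 0)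
    (hl : l > 0) (hm : m > 0) :
    EvolIso (!![a, b, c; l * a, l * b, l * c; m * a, m * b, m * c] : Matrix (Fin 3) (Fin 3) ℝ) (!![1, 0, 0; 1, 0, 0; 1, 0, 0] : Matrix (Fin 3) (Fin 3) ℝ) := by
  set r : ℝ := Real.sqrt l with hrdef
  set s : ℝ := Real.sqrt m with hsdef
  have hr : r^2 = l := Real.sq_sqrt hl.le
  have hs : s^2 = m := Real.sq_sqrt hm.le
  have hr0 : r ≠ 0 := by positivity
  have hs0 : s ≠ 0 := by positivity
  have hpos : 0 < a^2 + l*b^2 + m*c^2 := by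
    have h1 : 0 < a^2 := by positivity
    nlinarith [sq_nonneg b, sq_nonneg c]
  set T : ℝ := Real.sqrt (a^2 + l*b^2 + m*c^2) with hTdef
  have hT : T^2 = a^2 + l*b^2 + m*c^2 := Real.sq_sqrt hpos.le
  have hTpos : 0 < T := Real.sqrt_pos.mpr hpos
  have hT0 : T ≠ 0 := ne_of_gt hTpos
  set k : ℝ := if 0 ≤ a then -T else T with hkdef
  have hk : k^2 = T^2 := by
    rw [hkdef]; split <;> ring
  have he : T^2 - k*a ≠ 0 := by
    rw [hkdef]
    split
    · have : 0 < T^2 + T*a := by nlinarith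
      intro h; nlinarith
    · have ha' : a < 0 := by linarith [not_le.mp (by assumption)]
      have : 0 < T^2 - T*a := by nlinarith
      intro h; nlinarith
  have h2 : a^2 + (r*b)^2 + (s*c)^2 = T^2 := by
    linear_combination b^2 * hr + c^2 * hs - hT
  exact evolIso_trans (step1 a b c l m r s hr hs hr0 hs0)
    (step2 a (r*b) (s*c) T k hT0 hk h2 he)
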